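/- Let each f_i : ℝ^d → ℝ be differentiable, convex and L-smooth, let λ ≥ 0, 0 < p < 1, F = f + λψ, and let x* = (x_1*,…,x_n*) be the minimizer of F with block average x̄*. Set 𝓛 = (1/n)·max{L/(1−p), λ/p} and σ² = (1/n²)·Σ_{i=1}^n [ (1/(1−p))·‖∇f_i(x_i*)‖² + (λ²/p)·‖x_i* − x̄*‖² ]. Then for every x ∈ ℝ^{nd}: (1−p)·‖∇f(x)/(1−p)‖² + p·‖λ∇ψ(x)/p‖² ≤ 4𝓛·(F(x) − F(x*)) + 2σ². -/

import Mathlib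

open scoped BigOperators
open Finset

noncomputable section

/-- `Vec d` is the Euclidean space `ℝ^d`. -/
abbrev Vec (d : ℕ) := EuclideanSpace ℝ (Fin d)

/-- `Blk n d` is `ℝ^{nd}`, viewed as `n`-tuples of vectors in `ℝ^d`
with the Euclidean norm `‖x‖² = Σᵢ ‖xᵢ‖²`. -/
abbrev Blk (n d : ℕ) := PiLp 2 (fun _ : Fin n => Vec d)

/-- the block average `x̄ = (1/n) Σᵢ xᵢ`. -/
def blkAvg {n d : ℕ} (x : Blk n d) : Vec d := (n : ℝ)⁻¹ • ∑ i, x i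

/-- `f(x) = (1/n) Σᵢ fᵢ(xᵢ)`. -/
def fTot {n d : ℕ} (f : Fin n → Vec d → ℝ) (x : Blk n d) : ℝ :=
  (n : ℝ)⁻¹ * ∑ i, f i (x i)

/-- `ψ(x) = (1/(2n)) Σᵢ ‖xᵢ - x̄‖²`. -/
def psi {n d : ℕ} (x : Blk n d) : ℝ :=
  (2 * n : ℝ)⁻¹ * ∑ i, ‖x i - blkAvg x‖ ^ 2

/-- `F(x) = f(x) + λ ψ(x)`. -/
def FF {n d : ℕ} (f : Fin n → Vec d → ℝ) (lam : ℝ) (x : Blk n d) : ℝ :=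
  fTot f x + lam * psi x

/-- the gradient of `f`: its `i`-th block is `(1/n) ∇fᵢ(xᵢ)`, where `g i` is
the gradient of `fᵢ`. -/
def gradTot {n d : ℕ} (g : Fin n → Vec d → Vec d) (x : Blk n d) : Blk n d :=
  WithLp.toLp 2 fun i => (n : ℝ)⁻¹ • g i (x i)

/-- the gradient of `ψ`: its `i`-th block is `(1/n) (xᵢ - x̄)`. -/
def gradPsi {n d : ℕ} (x : Blk n d) : Blk n d :=
  WithLp.toLp 2 fun i => (n : ℝ)⁻¹ • (x i - blkAvg x)

/- ============ auxiliary lemmas ============ -/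
section StmtAux
open RealInnerProductSpace

/-- elementary: `0 ≤ c` given `0 ≤ t*c + t^2*K` for all positive `t`. -/
lemma quad_nonneg {c K : ℝ} (hK : 0 ≤ K)
    (h : ∀ t : ℝ, 0 < t → 0 ≤ t * c + t ^ 2 * K) : 0 ≤ c := by
  by_contra hc
  push_neg at hc
  rcases eq_or_lt_of_le hK with h0 | h0
  · have := h 1 one_pos; nlinarith
  · have ht : 0 < -c / (2 * K) := div_pos (by linarith) (by linarith)
    have h2 := h (-c / (2 * K)) ht
    have h4 : -c / (2 * K) * c + (-c / (2 * K)) ^ 2 * K = -(c ^ 2 / (4 * K)) := by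
      field_simp
      ring
    rw [h4] at h2
    have h5 : 0 < c ^ 2 / (4 * K) := div_pos (by nlinarith) (by linarith)
    linarith

section Hilbert
variable {E : Type*} [NormedAddCommGroup E] [InnerProductSpace ℝ E] [CompleteSpace E]

lemma norm_smul_sq (c : ℝ) (v : E) : ‖c • v‖ ^ 2 = c ^ 2 * ‖v‖ ^ 2 := by
  rw [norm_smul, mul_pow, Real.norm_eq_abs, sq_abs]

lemma norm_sq_le_two (a b : E) : ‖a‖ ^ 2 ≤ 2 * ‖a - b‖ ^ 2 + 2 * ‖b‖ ^ 2 := by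
  have h : ‖a‖ ≤ ‖a - b‖ + ‖b‖ := by
    simpa using norm_add_le (a - b) b
  nlinarith [norm_nonneg a, norm_nonneg (a - b), norm_nonneg b, sq_nonneg (‖a - b‖ - ‖b‖)]

lemma line_deriv {f : E → ℝ} {g : E → E}
    (hgrad : ∀ x, HasGradientAt f (g x) x) (x v : E) (t : ℝ) :
    HasDerivAt (fun s : ℝ => f (x + s • v)) ⟪g (x + t • v), v⟫ t := by
  have hc : HasDerivAt (fun s : ℝ => x + s • v) v t := by
    simpa using ((hasDerivAt_id t).smul_const v).const_add x
  have hf := hasGradientAt_iff_hasFDerivAt.mp (hgrad (x + t • v))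
  have h2 := hf.comp_hasDerivAt t hc
  simp only [InnerProductSpace.toDual_apply_apply] at h2
  exact h2

lemma convex_tangent {f : E → ℝ} {g : E → E}
    (hgrad : ∀ x, HasGradientAt f (g x) x)
    (hconv : ConvexOn ℝ Set.univ f) (x y : E) :
    f x + ⟪g x, y - x⟫ ≤ f y := by
  set q : ℝ → ℝ := fun s => f (x + s • (y - x)) with hq
  have hd : HasDerivAt q ⟪g x, y - x⟫ 0 := by
    simpa using line_deriv hgrad x (y - x) 0
  have hslope : ∀ t ∈ Set.Ioc (0:ℝ) 1, slope q 0 t ≤ f y - f x := by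
    intro t ht
    have key : (1 - t) • x + t • y = x + t • (y - x) := by
      simp [smul_sub, sub_smul]; abel
    have hcx : q t ≤ (1 - t) * f x + t * f y := by
      have := hconv.2 (Set.mem_univ x) (Set.mem_univ y)
        (by linarith [ht.1, ht.2] : (0:ℝ) ≤ 1 - t) (le_of_lt ht.1) (by ring)
      rw [key] at this
      simpa [hq, smul_eq_mul] using this
    have hq0 : q 0 = f x := by simp [hq]
    rw [slope_def_field, hq0, sub_zero, div_le_iff₀ ht.1]
    nlinarith [ht.1]
  have htend : Filter.Tendsto (slope q 0) (nhdsWithin 0 (Set.Ioi 0)) (nhds ⟪g x, y - x⟫) :=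
    (hasDerivAt_iff_tendsto_slope.mp hd).mono_left
      (nhdsWithin_mono 0 (fun s hs => ne_of_gt hs))
  have hle : ⟪g x, y - x⟫ ≤ f y - f x := by
    refine le_of_tendsto htend ?_
    filter_upwards [Ioc_mem_nhdsGT_of_mem (Set.mem_Ico.mpr ⟨le_refl _, zero_lt_one⟩)] with t ht
    exact hslope t ht
  linarith

lemma descent_lemma {f : E → ℝ} {g : E → E} {L : ℝ}
    (hgrad : ∀ x, HasGradientAt f (g x) x)
    (hlip : ∀ x y, ‖g x - g y‖ ≤ L * ‖x - y‖) (x y : E) :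
    f y ≤ f x + ⟪g x, y - x⟫ + L / 2 * ‖y - x‖ ^ 2 := by
  set v := y - x with hv
  have hcontg : Continuous g := by
    have : LipschitzWith (Real.toNNReal L) g := by
      apply LipschitzWith.of_dist_le_mul
      intro a b
      calc dist (g a) (g b) = ‖g a - g b‖ := by rw [dist_eq_norm]
        _ ≤ L * ‖a - b‖ := hlip a b
        _ ≤ (Real.toNNReal L) * dist a b := by
            rw [dist_eq_norm]
            exact mul_le_mul_of_nonneg_right (Real.le_coe_toNNReal L) (norm_nonneg _)
    exact this.continuous
  have hcont : Continuous fun t : ℝ => ⟪g (x + t • v), v⟫ :=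
    (Continuous.inner (hcontg.comp (by continuity)) continuous_const)
  have hftc : ∫ t in (0:ℝ)..1, ⟪g (x + t • v), v⟫ = f y - f x := by
    have := intervalIntegral.integral_eq_sub_of_hasDerivAt
      (f := fun s : ℝ => f (x + s • v)) (a := 0) (b := 1)
      (fun t _ => line_deriv hgrad x v t) (hcont.intervalIntegrable 0 1)
    simpa [hv] using this
  have hmono : ∫ t in (0:ℝ)..1, ⟪g (x + t • v), v⟫ ≤
      ∫ t in (0:ℝ)..1, (⟪g x, v⟫ + L * t * ‖v‖ ^ 2) := by
    apply intervalIntegral.integral_mono_on zero_le_one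
      (hcont.intervalIntegrable 0 1)
      ((by continuity : Continuous fun t : ℝ => ⟪g x, v⟫ + L * t * ‖v‖^2).intervalIntegrable 0 1)
    intro t ht
    have h1 : ⟪g (x + t • v) - g x, v⟫ ≤ L * t * ‖v‖ ^ 2 := by
      calc ⟪g (x + t • v) - g x, v⟫ ≤ ‖g (x + t • v) - g x‖ * ‖v‖ := real_inner_le_norm _ _
        _ ≤ (L * ‖(x + t • v) - x‖) * ‖v‖ :=
            mul_le_mul_of_nonneg_right (hlip _ _) (norm_nonneg _)
        _ = L * t * ‖v‖ ^ 2 := by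
            rw [add_sub_cancel_left, norm_smul, Real.norm_eq_abs, abs_of_nonneg ht.1]; ring
    have h2 : ⟪g (x + t • v), v⟫ = ⟪g x, v⟫ + ⟪g (x + t • v) - g x, v⟫ := by
      rw [inner_sub_left]; ring
    linarith
  have hrhs : ∫ t in (0:ℝ)..1, (⟪g x, v⟫ + L * t * ‖v‖ ^ 2) = ⟪g x, v⟫ + L / 2 * ‖v‖ ^ 2 := by
    rw [intervalIntegral.integral_add (intervalIntegrable_const)
      (Continuous.intervalIntegrable (by continuity) 0 1)]
    have : ∫ t in (0:ℝ)..1, L * t * ‖v‖ ^ 2 = L / 2 * ‖v‖ ^ 2 := by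
      have heq : (fun t : ℝ => L * t * ‖v‖ ^ 2) = fun t : ℝ => (L * ‖v‖ ^ 2) * t := by
        funext t; ring
      rw [heq, intervalIntegral.integral_const_mul, integral_id]
      ring
    rw [this]
    simp
  rw [hftc] at hmono
  rw [hrhs] at hmono
  linarith

lemma cocoercive {f : E → ℝ} {g : E → E} {L : ℝ}
    (hgrad : ∀ x, HasGradientAt f (g x) x) (hL : 0 ≤ L)
    (hconv : ConvexOn ℝ Set.univ f)
    (hlip : ∀ x y, ‖g x - g y‖ ≤ L * ‖x - y‖) (x y : E) :
    ‖g x - g y‖ ^ 2 ≤ 2 * L * (f x - f y - ⟪g y, x - y⟫) := by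
  rcases eq_or_lt_of_le hL with h0 | hLpos
  · have h1 := convex_tangent hgrad hconv y x
    have h2 := hlip x y
    rw [← h0] at h2 ⊢
    have hn : ‖g x - g y‖ = 0 := le_antisymm (by simpa using h2) (norm_nonneg _)
    rw [hn]
    nlinarith [h1]
  · set φ : E → ℝ := fun z => f z - ⟪g y, z⟫ with hφ
    set G : E → E := fun z => g z - g y with hG
    have hφgrad : ∀ z, HasGradientAt φ (G z) z := by
      intro z
      have h1 := hasGradientAt_iff_hasFDerivAt.mp (hgrad z)
      have h2 : HasFDerivAt (fun z : E => ⟪g y, z⟫)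
          (InnerProductSpace.toDual ℝ E (g y)) z :=
        (InnerProductSpace.toDual ℝ E (g y)).hasFDerivAt
      have := h1.sub h2
      rw [← map_sub] at this
      exact hasGradientAt_iff_hasFDerivAt.mpr this
    have hφconv : ConvexOn ℝ Set.univ φ := by
      apply hconv.sub
      refine ⟨convex_univ, fun a _ b _ s t hs ht hst => le_of_eq ?_⟩
      simp [inner_add_right, inner_smul_right]
    have hφlip : ∀ a b, ‖G a - G b‖ ≤ L * ‖a - b‖ := by
      intro a b; simpa [hG, sub_sub_sub_cancel_right] using hlip a b
    have hmin : ∀ z, φ y ≤ φ z := by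
      intro z
      have := convex_tangent hφgrad hφconv y z
      simpa [hG] using this
    set w := x - L⁻¹ • G x with hw
    have hdes := descent_lemma hφgrad hφlip x w
    have h3 : φ y ≤ φ w := hmin w
    have hinner : ⟪G x, w - x⟫ = -(L⁻¹ * ‖G x‖ ^ 2) := by
      rw [hw]
      simp [inner_smul_right, real_inner_self_eq_norm_sq]
    have hnorm : ‖w - x‖ ^ 2 = L⁻¹ ^ 2 * ‖G x‖ ^ 2 := by
      rw [hw]
      simp [norm_smul, abs_of_pos (inv_pos.mpr hLpos), mul_pow]
    rw [hinner, hnorm] at hdes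
    have hφxy : φ x - φ y = f x - f y - ⟪g y, x - y⟫ := by
      simp [hφ, inner_sub_right]; ring
    have hL' : L⁻¹ * L = 1 := inv_mul_cancel₀ (ne_of_gt hLpos)
    have hLL : L / 2 * (L⁻¹ ^ 2 * ‖G x‖ ^ 2) = L⁻¹ * ‖G x‖ ^ 2 / 2 := by
      field_simp
    have key : L⁻¹ * ‖G x‖ ^ 2 / 2 ≤ φ x - φ y := by
      have h4 := le_trans h3 hdes
      rw [hLL] at h4
      linarith
    have key2 : 2 * L * (L⁻¹ * ‖G x‖ ^ 2 / 2) ≤ 2 * L * (φ x - φ y) :=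
      mul_le_mul_of_nonneg_left key (by linarith)
    have hGx : ‖g x - g y‖ = ‖G x‖ := rfl
    rw [hGx, ← hφxy]
    calc ‖G x‖ ^ 2 = 2 * L * (L⁻¹ * ‖G x‖ ^ 2 / 2) := by
          field_simp
      _ ≤ 2 * L * (φ x - φ y) := key2

end Hilbert

section BlkAux
variable {n d : ℕ}

lemma blk_norm_sq (u : Blk n d) : ‖u‖ ^ 2 = ∑ i, ‖u i‖ ^ 2 :=
  PiLp.norm_sq_eq_of_L2 _ u

lemma blk_inner (u w : Blk n d) : ⟪u, w⟫ = ∑ i, ⟪u i, w i⟫ := PiLp.inner_apply u w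

lemma blk_sub_apply (u w : Blk n d) (i : Fin n) : (u - w) i = u i - w i := rfl

lemma blkAvg_sub (x y : Blk n d) : blkAvg (x - y) = blkAvg x - blkAvg y := by
  simp only [blkAvg, blk_sub_apply, Finset.sum_sub_distrib, smul_sub]

lemma sum_Q_eq_zero (hn : 0 < n) (y : Blk n d) : ∑ i, (y i - blkAvg y) = 0 := by
  rw [Finset.sum_sub_distrib, Finset.sum_const, Finset.card_univ, Fintype.card_fin]
  rw [blkAvg, ← Nat.cast_smul_eq_nsmul ℝ, smul_smul,
    mul_inv_cancel₀ (by exact_mod_cast hn.ne' : (n:ℝ) ≠ 0), one_smul, sub_self]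

lemma sumQ_le (hn : 0 < n) (z : Blk n d) :
    ∑ i, ‖z i - blkAvg z‖ ^ 2 ≤ ∑ i, ‖z i‖ ^ 2 := by
  have h1 : ∀ i, ‖z i - blkAvg z‖ ^ 2
      = ‖z i‖ ^ 2 - 2 * ⟪z i, blkAvg z⟫ + ‖blkAvg z‖ ^ 2 := fun i =>
    norm_sub_sq_real (z i) (blkAvg z)
  rw [Finset.sum_congr rfl fun i _ => h1 i]
  rw [Finset.sum_add_distrib, Finset.sum_sub_distrib, ← Finset.mul_sum, ← sum_inner,
    Finset.sum_const, Finset.card_univ, Fintype.card_fin]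
  have hS : ∑ i, z i = (n : ℝ) • blkAvg z := by
    rw [blkAvg, smul_smul, mul_inv_cancel₀ (by exact_mod_cast hn.ne' : (n:ℝ) ≠ 0), one_smul]
  rw [hS, real_inner_smul_left, real_inner_self_eq_norm_sq, ← Nat.cast_smul_eq_nsmul ℝ,
    smul_eq_mul]
  nlinarith [sq_nonneg ‖blkAvg z‖, (by exact_mod_cast hn : (0:ℝ) < n)]

lemma psi_nonneg (x : Blk n d) : 0 ≤ psi x := by
  unfold psi
  positivity

lemma psi_le (hn : 0 < n) (z : Blk n d) : psi z ≤ (2 * n : ℝ)⁻¹ * ‖z‖ ^ 2 := by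
  unfold psi
  rw [blk_norm_sq]
  exact mul_le_mul_of_nonneg_left (sumQ_le hn z) (by positivity)

lemma psi_bregman (hn : 0 < n) (x y : Blk n d) :
    psi x = psi y + ⟪gradPsi y, x - y⟫ + psi (x - y) := by
  have hN : (n:ℝ) ≠ 0 := by exact_mod_cast hn.ne'
  set Qx : Fin n → Vec d := fun i => x i - blkAvg x with hQx
  set Qy : Fin n → Vec d := fun i => y i - blkAvg y with hQy
  have hip : ⟪gradPsi y, x - y⟫ = (n:ℝ)⁻¹ * ∑ i, ⟪Qy i, Qx i - Qy i⟫ := by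
    rw [blk_inner]
    have h1 : ∀ i, ⟪gradPsi y i, (x - y) i⟫ = (n:ℝ)⁻¹ * ⟪Qy i, x i - y i⟫ := by
      intro i
      rw [blk_sub_apply]
      exact real_inner_smul_left _ _ _
    rw [Finset.sum_congr rfl fun i _ => h1 i, ← Finset.mul_sum]
    congr 1
    have h2 : ∀ i, x i - y i = (Qx i - Qy i) + (blkAvg x - blkAvg y) := by
      intro i; simp only [hQx, hQy]; abel
    calc ∑ i, ⟪Qy i, x i - y i⟫
        = ∑ i, (⟪Qy i, Qx i - Qy i⟫ + ⟪Qy i, blkAvg x - blkAvg y⟫) := by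
          refine Finset.sum_congr rfl fun i _ => ?_
          rw [h2 i, inner_add_right]
      _ = ∑ i, ⟪Qy i, Qx i - Qy i⟫ + ∑ i, ⟪Qy i, blkAvg x - blkAvg y⟫ :=
          Finset.sum_add_distrib
      _ = ∑ i, ⟪Qy i, Qx i - Qy i⟫ := by
          rw [← sum_inner, sum_Q_eq_zero hn y, inner_zero_left, add_zero]
  have hpz : psi (x - y) = (2 * n : ℝ)⁻¹ * ∑ i, ‖Qx i - Qy i‖ ^ 2 := by
    unfold psi
    congr 1
    refine Finset.sum_congr rfl fun i _ => ?_
    rw [blk_sub_apply, blkAvg_sub]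
    congr 1
    simp only [hQx, hQy]; abel
  have hpt : ∀ i, ‖Qx i - Qy i‖ ^ 2
      = ‖Qx i‖ ^ 2 - ‖Qy i‖ ^ 2 - 2 * ⟪Qy i, Qx i - Qy i⟫ := by
    intro i
    have h3 := norm_sub_sq_real (Qx i) (Qy i)
    have h4 : ⟪Qy i, Qx i - Qy i⟫ = ⟪Qx i, Qy i⟫ - ‖Qy i‖ ^ 2 := by
      rw [inner_sub_right, real_inner_self_eq_norm_sq, real_inner_comm]
    rw [h3, h4]; ring
  rw [hip, hpz, Finset.sum_congr rfl fun i _ => hpt i]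
  unfold psi
  rw [Finset.sum_sub_distrib, Finset.sum_sub_distrib, ← Finset.mul_sum]
  field_simp
  ring

lemma gradTot_sub_norm_sq (g : Fin n → Vec d → Vec d) (x y : Blk n d) :
    ‖gradTot g x - gradTot g y‖ ^ 2
      = (((n:ℝ))^2)⁻¹ * ∑ i, ‖g i (x i) - g i (y i)‖ ^ 2 := by
  rw [blk_norm_sq, Finset.mul_sum]
  refine Finset.sum_congr rfl fun i _ => ?_
  rw [blk_sub_apply]
  show ‖(n:ℝ)⁻¹ • g i (x i) - (n:ℝ)⁻¹ • g i (y i)‖ ^ 2 = _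
  rw [← smul_sub, norm_smul_sq, inv_pow]

lemma gradTot_norm_sq (g : Fin n → Vec d → Vec d) (x : Blk n d) :
    ‖gradTot g x‖ ^ 2 = (((n:ℝ))^2)⁻¹ * ∑ i, ‖g i (x i)‖ ^ 2 := by
  rw [blk_norm_sq, Finset.mul_sum]
  refine Finset.sum_congr rfl fun i _ => ?_
  show ‖(n:ℝ)⁻¹ • g i (x i)‖ ^ 2 = _
  rw [norm_smul_sq, inv_pow]

lemma gradPsi_norm_sq (x : Blk n d) :
    ‖gradPsi x‖ ^ 2 = (((n:ℝ))^2)⁻¹ * ∑ i, ‖x i - blkAvg x‖ ^ 2 := by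
  rw [blk_norm_sq, Finset.mul_sum]
  refine Finset.sum_congr rfl fun i _ => ?_
  show ‖(n:ℝ)⁻¹ • (x i - blkAvg x)‖ ^ 2 = _
  rw [norm_smul_sq, inv_pow]

lemma gradPsi_sub (x y : Blk n d) : gradPsi x - gradPsi y = gradPsi (x - y) := by
  refine PiLp.ext fun i => ?_
  show gradPsi x i - gradPsi y i = _
  unfold gradPsi
  simp only [WithLp.ofLp_toLp]
  rw [← smul_sub, blk_sub_apply, blkAvg_sub]
  congr 1
  abel

lemma sum_eq_psi (hn : 0 < n) (z : Blk n d) :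
    ∑ i, ‖z i - blkAvg z‖ ^ 2 = 2 * (n:ℝ) * psi z := by
  unfold psi
  rw [← mul_assoc, mul_inv_cancel₀ (by positivity : (2 * (n:ℝ)) ≠ 0), one_mul]

lemma gradTot_inner (g : Fin n → Vec d → Vec d) (y w : Blk n d) :
    ⟪gradTot g y, w⟫ = (n:ℝ)⁻¹ * ∑ i, ⟪g i (y i), w i⟫ := by
  rw [blk_inner, Finset.mul_sum]
  exact Finset.sum_congr rfl fun i _ => real_inner_smul_left _ _ _

end BlkAux
end StmtAux

set_option maxHeartbeats 1000000
open RealInnerProductSpace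

/-- second moment bound: if each `fᵢ` is differentiable, convex and
`L`-smooth, `λ ≥ 0`, `0 < p < 1`, `x*` minimizes `F = f + λψ`,
`𝓛 = (1/n) max{L/(1−p), λ/p}` and
`σ² = (1/n²) Σᵢ [(1/(1−p))‖∇fᵢ(xᵢ*)‖² + (λ²/p)‖xᵢ* − x̄*‖²]`, then for all `x`:
`(1−p)‖∇f(x)/(1−p)‖² + p‖λ∇ψ(x)/p‖² ≤ 4𝓛(F(x) − F(x*)) + 2σ²`. -/
theorem stmt13 (n d : ℕ) (hn : 0 < n) (L lam p : ℝ)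
    (hlam : 0 ≤ lam) (hp0 : 0 < p) (hp1 : p < 1)
    (f : Fin n → Vec d → ℝ) (g : Fin n → Vec d → Vec d)
    (hgrad : ∀ i (x : Vec d), HasGradientAt (f i) (g i x) x)
    (hconv : ∀ i, ConvexOn ℝ Set.univ (f i))
    (hsmooth : ∀ i (x y : Vec d), ‖g i x - g i y‖ ≤ L * ‖x - y‖)
    (xstar : Blk n d) (hxstar : ∀ y : Blk n d, FF f lam xstar ≤ FF f lam y) :
    ∀ x : Blk n d,
      (1 - p) * ‖(1 - p)⁻¹ • gradTot g x‖ ^ 2 + p * ‖p⁻¹ • (lam • gradPsi x)‖ ^ 2 ≤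
        4 * ((n : ℝ)⁻¹ * max (L / (1 - p)) (lam / p)) *
            (FF f lam x - FF f lam xstar) +
          2 * (((n : ℝ) ^ 2)⁻¹ *
            ∑ i, ((1 / (1 - p)) * ‖g i (xstar i)‖ ^ 2 +
              (lam ^ 2 / p) * ‖xstar i - blkAvg xstar‖ ^ 2)) := by

  intro x
  have hN : (0:ℝ) < (n:ℝ) := by exact_mod_cast hn
  have hN' : ((n:ℝ)) ≠ 0 := hN.ne'
  have h1p : (0:ℝ) < 1 - p := by linarith
  rcases Nat.eq_zero_or_pos d with hd | hd
  · -- degenerate case d = 0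
    subst hd
    haveI hsub : Subsingleton (Vec 0) := ⟨fun a b => PiLp.ext fun i => i.elim0⟩
    have hz : ∀ v : Vec 0, ‖v‖ = 0 := fun v => by
      rw [Subsingleton.elim v (0 : Vec 0)]; simp
    have hxx : x = xstar := PiLp.ext fun i => Subsingleton.elim _ _
    have e1 : gradTot g x = (0 : Blk n 0) := PiLp.ext fun i => Subsingleton.elim _ _
    have e2 : gradPsi x = (0 : Blk n 0) := PiLp.ext fun i => Subsingleton.elim _ _
    rw [e1, e2, hxx]
    simp [hz]
  -- main case d > 0; first, L must be nonnegative
  have hL : 0 ≤ L := by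
    have h1 := hsmooth ⟨0, hn⟩ (EuclideanSpace.single (⟨0, hd⟩ : Fin d) (1:ℝ)) 0
    rw [sub_zero, EuclideanSpace.norm_single, norm_one, mul_one] at h1
    exact le_trans (norm_nonneg _) h1
  -- per-block convexity and cocoercivity
  have hDpos : ∀ i, 0 ≤ f i (x i) - f i (xstar i) - ⟪g i (xstar i), x i - xstar i⟫ := by
    intro i
    have := convex_tangent (hgrad i) (hconv i) (xstar i) (x i)
    linarith
  have hco : ∀ i, ‖g i (x i) - g i (xstar i)‖ ^ 2
      ≤ 2 * L * (f i (x i) - f i (xstar i) - ⟪g i (xstar i), x i - xstar i⟫) :=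
    fun i => cocoercive (hgrad i) hL (hconv i) (hsmooth i) (x i) (xstar i)
  set SD : ℝ := ∑ i, (f i (x i) - f i (xstar i) - ⟪g i (xstar i), x i - xstar i⟫) with hSD
  set Sg : ℝ := ∑ i, ‖g i (xstar i)‖ ^ 2 with hSg
  set Sp : ℝ := ∑ i, ‖xstar i - blkAvg xstar‖ ^ 2 with hSp
  set PZ : ℝ := psi (x - xstar) with hPZ
  have hSDpos : 0 ≤ SD := Finset.sum_nonneg fun i _ => hDpos i
  have hPZpos : 0 ≤ PZ := psi_nonneg _
  -- Bregman identity for fTot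
  have hBf : fTot f x - fTot f xstar
      = (n:ℝ)⁻¹ * SD + ⟪gradTot g xstar, x - xstar⟫ := by
    rw [gradTot_inner, fTot, fTot, hSD]
    rw [← mul_sub, ← mul_add, ← Finset.sum_sub_distrib, ← Finset.sum_add_distrib]
    congr 1
    refine Finset.sum_congr rfl fun i _ => ?_
    rw [blk_sub_apply]
    ring
  -- Bregman identity for psi
  have hBp : psi x - psi xstar = ⟪gradPsi xstar, x - xstar⟫ + PZ := by
    have := psi_bregman hn x xstar
    rw [hPZ]; linarith
  -- first-order optimality at xstar
  have hvw : 0 ≤ ⟪gradTot g xstar, x - xstar⟫ + lam * ⟪gradPsi xstar, x - xstar⟫ := by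
    apply quad_nonneg (K := (L + lam) / (2 * (n:ℝ)) * ‖x - xstar‖ ^ 2) (by positivity)
    intro t ht
    have hFt := hxstar (xstar + t • (x - xstar))
    have hcancel : xstar + t • (x - xstar) - xstar = t • (x - xstar) := by abel
    -- descent bound for fTot
    have hft : fTot f (xstar + t • (x - xstar)) ≤ fTot f xstar
        + t * ⟪gradTot g xstar, x - xstar⟫ + t ^ 2 * (L / (2 * (n:ℝ))) * ‖x - xstar‖ ^ 2 := by
      have hptw : ∀ i, f i ((xstar + t • (x - xstar)) i) ≤ f i (xstar i)
          + ⟪g i (xstar i), t • ((x - xstar) i)⟫ + L / 2 * ‖t • ((x - xstar) i)‖ ^ 2 := by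
        intro i
        have := descent_lemma (hgrad i) (hsmooth i) (xstar i) (xstar i + t • ((x - xstar) i))
        rw [add_sub_cancel_left] at this
        exact this
      have hsum := Finset.sum_le_sum (s := Finset.univ) fun i _ => hptw i
      have hmul := mul_le_mul_of_nonneg_left hsum (by positivity : (0:ℝ) ≤ (n:ℝ)⁻¹)
      rw [Finset.sum_add_distrib, Finset.sum_add_distrib] at hmul
      have e3 : ∑ i, ⟪g i (xstar i), t • ((x - xstar) i)⟫
          = t * ∑ i, ⟪g i (xstar i), (x - xstar) i⟫ := by
        rw [Finset.mul_sum]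
        exact Finset.sum_congr rfl fun i _ => real_inner_smul_right _ _ _
      have e4 : ∑ i, L / 2 * ‖t • ((x - xstar) i)‖ ^ 2
          = L / 2 * t ^ 2 * ∑ i, ‖(x - xstar) i‖ ^ 2 := by
        rw [Finset.mul_sum]
        refine Finset.sum_congr rfl fun i _ => ?_
        rw [norm_smul_sq]
        ring
      rw [e3, e4, ← blk_norm_sq] at hmul
      have e5 : ⟪gradTot g xstar, x - xstar⟫
          = (n:ℝ)⁻¹ * ∑ i, ⟪g i (xstar i), (x - xstar) i⟫ := gradTot_inner g xstar (x - xstar)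
      calc fTot f (xstar + t • (x - xstar))
          = (n:ℝ)⁻¹ * ∑ i, f i ((xstar + t • (x - xstar)) i) := rfl
        _ ≤ (n:ℝ)⁻¹ * ((∑ i, f i (xstar i)) + t * ∑ i, ⟪g i (xstar i), (x - xstar) i⟫
              + L / 2 * t ^ 2 * ‖x - xstar‖ ^ 2) := by linarith [hmul]
        _ = fTot f xstar + t * ⟪gradTot g xstar, x - xstar⟫
              + t ^ 2 * (L / (2 * (n:ℝ))) * ‖x - xstar‖ ^ 2 := by
            rw [fTot, e5]
            field_simp
    -- exact quadratic expansion for psi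
    have hpb := psi_bregman hn (xstar + t • (x - xstar)) xstar
    rw [hcancel] at hpb
    have h5 : ⟪gradPsi xstar, t • (x - xstar)⟫ = t * ⟪gradPsi xstar, x - xstar⟫ :=
      real_inner_smul_right _ _ _
    have h6 : psi (t • (x - xstar)) ≤ t ^ 2 * (2 * (n:ℝ))⁻¹ * ‖x - xstar‖ ^ 2 := by
      have h7 := psi_le hn (t • (x - xstar))
      have h8 : ‖t • (x - xstar)‖ ^ 2 = t ^ 2 * ‖x - xstar‖ ^ 2 := norm_smul_sq t _
      rw [h8] at h7
      calc psi (t • (x - xstar)) ≤ (2 * (n:ℝ))⁻¹ * (t ^ 2 * ‖x - xstar‖ ^ 2) := h7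
        _ = t ^ 2 * (2 * (n:ℝ))⁻¹ * ‖x - xstar‖ ^ 2 := by ring
    have hpt : psi (xstar + t • (x - xstar)) ≤ psi xstar
        + t * ⟪gradPsi xstar, x - xstar⟫ + t ^ 2 * (2 * (n:ℝ))⁻¹ * ‖x - xstar‖ ^ 2 := by
      rw [hpb, h5]
      linarith
    have hlam' := mul_le_mul_of_nonneg_left hpt hlam
    rw [FF, FF] at hFt
    have hKe : lam * (t ^ 2 * (2 * (n:ℝ))⁻¹ * ‖x - xstar‖ ^ 2)
        + t ^ 2 * (L / (2 * (n:ℝ))) * ‖x - xstar‖ ^ 2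
        = t ^ 2 * ((L + lam) / (2 * (n:ℝ)) * ‖x - xstar‖ ^ 2) := by
      field_simp
      ring
    nlinarith [hFt, hft, hlam', hKe]
  -- energy lower bound on F(x) - F(x*)
  have hEF : (n:ℝ)⁻¹ * SD + lam * PZ ≤ FF f lam x - FF f lam xstar := by
    have h7 : lam * (psi x - psi xstar)
        = lam * ⟪gradPsi xstar, x - xstar⟫ + lam * PZ := by rw [hBp]; ring
    rw [FF, FF]
    linarith [hvw, hBf, h7]
  -- squared norm bounds
  have hGx : ‖gradTot g x‖ ^ 2
      ≤ 2 * ((((n:ℝ))^2)⁻¹ * (2 * L * SD)) + 2 * ((((n:ℝ))^2)⁻¹ * Sg) := by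
    have t1 := norm_sq_le_two (gradTot g x) (gradTot g xstar)
    rw [gradTot_sub_norm_sq g x xstar, gradTot_norm_sq g xstar] at t1
    have t2 : ∑ i, ‖g i (x i) - g i (xstar i)‖ ^ 2 ≤ 2 * L * SD := by
      rw [hSD, Finset.mul_sum]
      exact Finset.sum_le_sum fun i _ => hco i
    have t3 := mul_le_mul_of_nonneg_left t2 (by positivity : (0:ℝ) ≤ (((n:ℝ))^2)⁻¹)
    rw [← hSg] at t1
    linarith
  have hPx : ‖gradPsi x‖ ^ 2
      ≤ 2 * (2 * (n:ℝ)⁻¹ * PZ) + 2 * ((((n:ℝ))^2)⁻¹ * Sp) := by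
    have t1 := norm_sq_le_two (gradPsi x) (gradPsi xstar)
    have t2 : ‖gradPsi x - gradPsi xstar‖ ^ 2 = 2 * (n:ℝ)⁻¹ * PZ := by
      rw [gradPsi_sub, gradPsi_norm_sq, sum_eq_psi hn, hPZ]
      field_simp
    have t3 : ‖gradPsi xstar‖ ^ 2 = (((n:ℝ))^2)⁻¹ * Sp := by
      rw [gradPsi_norm_sq, hSp]
    rw [t2, t3] at t1
    exact t1
  -- rewrite the left-hand side
  have hLHS1 : (1 - p) * ‖(1 - p)⁻¹ • gradTot g x‖ ^ 2
      = (1 - p)⁻¹ * ‖gradTot g x‖ ^ 2 := by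
    rw [norm_smul_sq]
    field_simp
  have hLHS2 : p * ‖p⁻¹ • (lam • gradPsi x)‖ ^ 2
      = p⁻¹ * (lam ^ 2 * ‖gradPsi x‖ ^ 2) := by
    rw [smul_smul, norm_smul_sq]
    field_simp
  rw [hLHS1, hLHS2]
  -- rewrite sigma
  have hsig : ∑ i, ((1 / (1 - p)) * ‖g i (xstar i)‖ ^ 2
        + (lam ^ 2 / p) * ‖xstar i - blkAvg xstar‖ ^ 2)
      = (1 / (1 - p)) * Sg + (lam ^ 2 / p) * Sp := by
    rw [Finset.sum_add_distrib, ← Finset.mul_sum, ← Finset.mul_sum, hSg, hSp]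
  rw [hsig]
  -- final assembly
  set M := max (L / (1 - p)) (lam / p) with hM
  have hM0 : 0 ≤ M := le_trans (by positivity) (le_max_right _ _)
  have hM1 : L / (1 - p) ≤ M := le_max_left _ _
  have hM2 : lam / p ≤ M := le_max_right _ _
  have hA1 : (1 - p)⁻¹ * ‖gradTot g x‖ ^ 2
      ≤ 4 * (n:ℝ)⁻¹ * (L / (1 - p)) * ((n:ℝ)⁻¹ * SD)
        + 2 * ((((n:ℝ))^2)⁻¹ * ((1 / (1 - p)) * Sg)) := by
    have := mul_le_mul_of_nonneg_left hGx (by positivity : (0:ℝ) ≤ (1 - p)⁻¹)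
    have e1 : (1 - p)⁻¹ * (2 * ((((n:ℝ))^2)⁻¹ * (2 * L * SD)) + 2 * ((((n:ℝ))^2)⁻¹ * Sg))
        = 4 * (n:ℝ)⁻¹ * (L / (1 - p)) * ((n:ℝ)⁻¹ * SD)
          + 2 * ((((n:ℝ))^2)⁻¹ * ((1 / (1 - p)) * Sg)) := by
      field_simp
      ring
    linarith [this, e1.le, e1.ge]
  have hA2 : p⁻¹ * (lam ^ 2 * ‖gradPsi x‖ ^ 2)
      ≤ 4 * (n:ℝ)⁻¹ * (lam / p) * (lam * PZ)
        + 2 * ((((n:ℝ))^2)⁻¹ * ((lam ^ 2 / p) * Sp)) := by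
    have h9 := mul_le_mul_of_nonneg_left hPx (sq_nonneg lam)
    have h10 := mul_le_mul_of_nonneg_left h9 (by positivity : (0:ℝ) ≤ p⁻¹)
    have e1 : p⁻¹ * (lam ^ 2 * (2 * (2 * (n:ℝ)⁻¹ * PZ) + 2 * ((((n:ℝ))^2)⁻¹ * Sp)))
        = 4 * (n:ℝ)⁻¹ * (lam / p) * (lam * PZ)
          + 2 * ((((n:ℝ))^2)⁻¹ * ((lam ^ 2 / p) * Sp)) := by
      field_simp
      ring
    linarith [h10, e1.le, e1.ge]
  have hB1 : 4 * (n:ℝ)⁻¹ * (L / (1 - p)) * ((n:ℝ)⁻¹ * SD)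
      ≤ 4 * (n:ℝ)⁻¹ * M * ((n:ℝ)⁻¹ * SD) := by
    apply mul_le_mul_of_nonneg_right _ (by positivity)
    apply mul_le_mul_of_nonneg_left hM1 (by positivity)
  have hB2 : 4 * (n:ℝ)⁻¹ * (lam / p) * (lam * PZ)
      ≤ 4 * (n:ℝ)⁻¹ * M * (lam * PZ) := by
    apply mul_le_mul_of_nonneg_right _ (by positivity)
    apply mul_le_mul_of_nonneg_left hM2 (by positivity)
  have hB3 : 4 * (n:ℝ)⁻¹ * M * ((n:ℝ)⁻¹ * SD) + 4 * (n:ℝ)⁻¹ * M * (lam * PZ)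
      ≤ 4 * ((n:ℝ)⁻¹ * M) * (FF f lam x - FF f lam xstar) := by
    have h11 : 4 * ((n:ℝ)⁻¹ * M) * ((n:ℝ)⁻¹ * SD + lam * PZ)
        ≤ 4 * ((n:ℝ)⁻¹ * M) * (FF f lam x - FF f lam xstar) :=
      mul_le_mul_of_nonneg_left hEF (by positivity)
    linarith [h11]
  have hmulPZ : 0 ≤ lam * PZ := mul_nonneg hlam hPZpos
  have hmulSD : 0 ≤ (n:ℝ)⁻¹ * SD := by positivity
  calc (1 - p)⁻¹ * ‖gradTot g x‖ ^ 2 + p⁻¹ * (lam ^ 2 * ‖gradPsi x‖ ^ 2)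
      ≤ (4 * (n:ℝ)⁻¹ * (L / (1 - p)) * ((n:ℝ)⁻¹ * SD)
          + 2 * ((((n:ℝ))^2)⁻¹ * ((1 / (1 - p)) * Sg)))
        + (4 * (n:ℝ)⁻¹ * (lam / p) * (lam * PZ)
          + 2 * ((((n:ℝ))^2)⁻¹ * ((lam ^ 2 / p) * Sp))) := by linarith [hA1, hA2]
    _ ≤ 4 * ((n:ℝ)⁻¹ * M) * (FF f lam x - FF f lam xstar)
        + 2 * ((((n:ℝ)) ^ 2)⁻¹ * ((1 / (1 - p)) * Sg + (lam ^ 2 / p) * Sp)) := by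
      have e2 : 2 * ((((n:ℝ))^2)⁻¹ * ((1 / (1 - p)) * Sg))
          + 2 * ((((n:ℝ))^2)⁻¹ * ((lam ^ 2 / p) * Sp))
          = 2 * ((((n:ℝ)) ^ 2)⁻¹ * ((1 / (1 - p)) * Sg + (lam ^ 2 / p) * Sp)) := by ring
      linarith [hB1, hB2, hB3, e2.le, e2.ge]
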